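/- Let n, θ, λ, ζ, P_c > 0, let ε ∈ (0,1), and let c > 0. For ρ > 0 define the finite-blocklength rate r(ρ,z) = log(1+ρz)/log 2 − c·√(1 − (1+ρz)^{-2}) for z > 0, the mean rate E(ρ) = ∫_0^∞ r(ρ,z)·e^{−z} dz, and the effective energy efficiency with empty-buffer probability η(ρ) = [ −(1/(nθ))·log( ∫_0^∞ (ε + (1−ε)·exp(−nθ·r(ρ,z)))·e^{−z} dz ) ] / ( λζρ/E(ρ) + P_c ). Then η(ρ) tends to 0 as ρ tends to 0 from the right. -/

import Mathlib

open MeasureTheory Filter Set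
lemma aux_int_exp : IntegrableOn (fun z : ℝ => Real.exp (-z)) (Set.Ioi 0) := by
  simpa using exp_neg_integrableOn_Ioi 0 one_pos

lemma aux_int_zexp : IntegrableOn (fun z : ℝ => z * Real.exp (-z)) (Set.Ioi 0) := by
  have h := Real.GammaIntegral_convergent (by norm_num : (0:ℝ) < 2)
  refine h.congr_fun (fun x hx => ?_) measurableSet_Ioi
  show Real.exp (-x) * x ^ ((2:ℝ)-1) = x * Real.exp (-x)
  rw [show (2:ℝ)-1 = 1 by norm_num, Real.rpow_one, mul_comm]

lemma aux_zexp_val : ∫ z in Set.Ioi (0:ℝ), z * Real.exp (-z) = 1 := by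
  have h := Real.Gamma_eq_integral (by norm_num : (0:ℝ) < 2)
  rw [Real.Gamma_two] at h
  calc ∫ z in Set.Ioi (0:ℝ), z * Real.exp (-z)
      = ∫ z in Set.Ioi (0:ℝ), Real.exp (-z) * z ^ ((2:ℝ)-1) := by
        refine setIntegral_congr_fun measurableSet_Ioi fun z hz => ?_
        rw [show (2:ℝ)-1 = 1 by norm_num, Real.rpow_one, mul_comm]
    _ = 1 := h.symm

lemma aux_sqrtz_le (z : ℝ) (hz : 0 ≤ z) : Real.sqrt z ≤ 1 + z := by
  nlinarith [Real.sq_sqrt hz, Real.sqrt_nonneg z]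

lemma aux_int_h2 : IntegrableOn (fun z : ℝ => Real.sqrt z / (1+z) * Real.exp (-z)) (Set.Ioi 0) := by
  refine Integrable.mono aux_int_exp ?_ ?_
  · exact (((Real.continuous_sqrt.measurable).div (measurable_const.add measurable_id)).mul
      (measurable_id.neg.exp)).aestronglyMeasurable
  · filter_upwards [ae_restrict_mem measurableSet_Ioi] with z hz
    have hz0 : (0:ℝ) < z := hz
    have h1z : (0:ℝ) < 1 + z := by linarith
    have hs : Real.sqrt z ≤ 1 + z := aux_sqrtz_le z hz0.le
    have hd : Real.sqrt z / (1+z) ≤ 1 := by rw [div_le_one h1z]; exact hs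
    have hd0 : 0 ≤ Real.sqrt z / (1+z) := div_nonneg (Real.sqrt_nonneg z) h1z.le
    rw [Real.norm_eq_abs, Real.norm_eq_abs, abs_of_nonneg (by positivity),
      abs_of_nonneg (Real.exp_pos _).le]
    nlinarith [Real.exp_pos (-z)]

lemma aux_h2_lb : Real.exp (-2) / 3 ≤ ∫ z in Set.Ioi (0:ℝ), Real.sqrt z / (1+z) * Real.exp (-z) := by
  have hsub : (∫ z in Set.Ioc (1:ℝ) 2, Real.sqrt z / (1+z) * Real.exp (-z))
      ≤ ∫ z in Set.Ioi (0:ℝ), Real.sqrt z / (1+z) * Real.exp (-z) := by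
    refine setIntegral_mono_set aux_int_h2 ?_ ?_
    · filter_upwards [ae_restrict_mem measurableSet_Ioi] with z hz
      have hz0 : (0:ℝ) < z := hz
      exact mul_nonneg (div_nonneg (Real.sqrt_nonneg _) (by linarith)) (Real.exp_pos _).le
    · exact HasSubset.Subset.eventuallyLE (fun z hz => lt_trans one_pos hz.1)
  refine le_trans ?_ hsub
  have hconst : ∀ z ∈ Set.Ioc (1:ℝ) 2, Real.exp (-2) / 3 ≤ Real.sqrt z / (1+z) * Real.exp (-z) := by
    intro z hz
    obtain ⟨hz1, hz2⟩ := hz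
    have h1 : (1:ℝ) ≤ Real.sqrt z := Real.one_le_sqrt.mpr hz1.le
    have hd : (1:ℝ)/3 ≤ Real.sqrt z / (1+z) :=
      div_le_div₀ (Real.sqrt_nonneg z) h1 (by linarith) (by linarith)
    have hexp : Real.exp (-2) ≤ Real.exp (-z) := Real.exp_le_exp.mpr (by linarith)
    calc Real.exp (-2) / 3 = (1/3) * Real.exp (-2) := by ring
      _ ≤ Real.sqrt z / (1+z) * Real.exp (-z) :=
        mul_le_mul hd hexp (Real.exp_pos _).le (div_nonneg (Real.sqrt_nonneg z) (by linarith))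
  have hvol : (volume (Set.Ioc (1:ℝ) 2)).toReal = 1 := by
    rw [Real.volume_Ioc]
    norm_num
  have h := setIntegral_ge_of_const_le measurableSet_Ioc
    (by rw [Real.volume_Ioc]; exact ENNReal.ofReal_ne_top) hconst
    (aux_int_h2.mono_set (fun z hz => lt_trans one_pos hz.1))
  rw [Measure.real, hvol, one_smul] at h
  exact h

lemma aux_sqrt_lb (u : ℝ) (hu : 0 ≤ u) :
    Real.sqrt u / (1+u) ≤ Real.sqrt (1 - 1/(1+u)^2) := by
  have h1 : (0:ℝ) < 1 + u := by linarith
  rw [Real.le_sqrt (div_nonneg (Real.sqrt_nonneg u) h1.le) (by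
    have : 1/(1+u)^2 ≤ 1 := by
      rw [div_le_one (by positivity)]
      nlinarith
    linarith)]
  rw [div_pow, Real.sq_sqrt hu]
  have h2 : 1 - 1/(1+u)^2 = (u^2 + 2*u)/(1+u)^2 := by
    field_simp
    ring
  rw [h2]
  gcongr
  nlinarith

lemma aux_r_meas (c ρ : ℝ) :
    Measurable (fun z : ℝ =>
      Real.log (1 + ρ*z)/Real.log 2 - c * Real.sqrt (1 - 1/(1+ρ*z)^2)) := by
  have h1 : Measurable (fun z : ℝ => 1 + ρ*z) := measurable_const.add (measurable_const.mul measurable_id)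
  exact ((Real.measurable_log.comp h1).div_const _).sub
    (measurable_const.mul ((Real.continuous_sqrt.measurable).comp
      (measurable_const.sub (measurable_const.div ((h1.pow_const 2))))))

lemma Ekey (c ρ : ℝ) (hc : 0 < c) (hρ0 : 0 < ρ) (hρ1 : ρ ≤ 1) :
    (∫ z in Set.Ioi (0:ℝ),
      (Real.log (1 + ρ*z)/Real.log 2 - c * Real.sqrt (1 - 1/(1+ρ*z)^2)) * Real.exp (-z))
      ≤ ρ / Real.log 2 - c * Real.sqrt ρ * (Real.exp (-2)/3) := by
  have hl2 : 0 < Real.log 2 := Real.log_pos one_lt_two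
  set f : ℝ → ℝ := fun z =>
    (Real.log (1 + ρ*z)/Real.log 2 - c * Real.sqrt (1 - 1/(1+ρ*z)^2)) * Real.exp (-z) with hf
  set g : ℝ → ℝ := fun z =>
    (ρ/Real.log 2) * (z * Real.exp (-z))
      - (c * Real.sqrt ρ) * (Real.sqrt z / (1+z) * Real.exp (-z)) with hg
  have hg_int : IntegrableOn g (Set.Ioi 0) :=
    (aux_int_zexp.const_mul _).sub (aux_int_h2.const_mul _)
  have hf_int : IntegrableOn f (Set.Ioi 0) := by
    refine Integrable.mono ((aux_int_zexp.const_mul (1/Real.log 2)).add (aux_int_exp.const_mul c)) ?_ ?_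
    · exact ((aux_r_meas c ρ).mul (measurable_id.neg.exp)).aestronglyMeasurable
    · filter_upwards [ae_restrict_mem measurableSet_Ioi] with z hz
      have hz0 : (0:ℝ) < z := hz
      have h1 : (0:ℝ) < 1 + ρ*z := by nlinarith
      have hlog0 : 0 ≤ Real.log (1+ρ*z) := Real.log_nonneg (by nlinarith)
      have hlog1 : Real.log (1+ρ*z) ≤ ρ*z := by nlinarith [Real.log_le_sub_one_of_pos h1]
      have hsq0 : 0 ≤ Real.sqrt (1 - 1/(1+ρ*z)^2) := Real.sqrt_nonneg _
      have hsq1 : Real.sqrt (1 - 1/(1+ρ*z)^2) ≤ 1 := Real.sqrt_le_one.mpr (by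
        have : 0 ≤ 1/(1+ρ*z)^2 := by positivity
        linarith)
      have hexp : (0:ℝ) < Real.exp (-z) := Real.exp_pos _
      rw [Real.norm_eq_abs, Real.norm_eq_abs, abs_mul, abs_of_pos hexp]
      have key : |Real.log (1+ρ*z)/Real.log 2 - c * Real.sqrt (1-1/(1+ρ*z)^2)|
          ≤ z/Real.log 2 + c := by
        rw [abs_le]
        have hld : 0 ≤ Real.log (1+ρ*z)/Real.log 2 := div_nonneg hlog0 hl2.le
        have hld2 : Real.log (1+ρ*z)/Real.log 2 ≤ z/Real.log 2 := by
          apply div_le_div_of_nonneg_right ?_ hl2.le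
          nlinarith
        have hcs : c * Real.sqrt (1-1/(1+ρ*z)^2) ≤ c * 1 :=
          mul_le_mul_of_nonneg_left hsq1 hc.le
        have hcs0 : 0 ≤ c * Real.sqrt (1-1/(1+ρ*z)^2) := mul_nonneg hc.le hsq0
        have hz2 : 0 ≤ z/Real.log 2 := div_nonneg hz0.le hl2.le
        constructor <;> nlinarith
      have hrhs : 0 ≤ 1/Real.log 2 * (z * Real.exp (-z)) + c * Real.exp (-z) := by positivity
      simp only [Pi.add_apply]
      rw [abs_of_nonneg hrhs]
      calc |Real.log (1+ρ*z)/Real.log 2 - c * Real.sqrt (1-1/(1+ρ*z)^2)| * Real.exp (-z)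
          ≤ (z/Real.log 2 + c) * Real.exp (-z) := mul_le_mul_of_nonneg_right key hexp.le
        _ = 1/Real.log 2 * (z * Real.exp (-z)) + c * Real.exp (-z) := by ring
  have hfg : f ≤ᵐ[volume.restrict (Set.Ioi 0)] g := by
    filter_upwards [ae_restrict_mem measurableSet_Ioi] with z hz
    have hz0 : (0:ℝ) < z := hz
    have h1 : (0:ℝ) < 1 + ρ*z := by nlinarith
    have hexp : (0:ℝ) ≤ Real.exp (-z) := (Real.exp_pos _).le
    have hlogdiv : Real.log (1+ρ*z)/Real.log 2 ≤ ρ*z/Real.log 2 := by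
      apply div_le_div_of_nonneg_right ?_ hl2.le
      nlinarith [Real.log_le_sub_one_of_pos h1]
    have hsqrt : Real.sqrt ρ * Real.sqrt z / (1+z) ≤ Real.sqrt (1 - 1/(1+ρ*z)^2) := by
      have h2 := aux_sqrt_lb (ρ*z) (by positivity)
      have h3 : Real.sqrt (ρ*z) = Real.sqrt ρ * Real.sqrt z := Real.sqrt_mul hρ0.le z
      have h4 : Real.sqrt (ρ*z) / (1+z) ≤ Real.sqrt (ρ*z) / (1+ρ*z) := by
        apply div_le_div_of_nonneg_left (Real.sqrt_nonneg _) h1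
        nlinarith
      rw [h3] at h4 h2
      exact le_trans h4 h2
    have step := mul_le_mul_of_nonneg_right
      (sub_le_sub hlogdiv (mul_le_mul_of_nonneg_left hsqrt hc.le)) hexp
    calc f z = (Real.log (1+ρ*z)/Real.log 2 - c * Real.sqrt (1-1/(1+ρ*z)^2)) * Real.exp (-z) := rfl
      _ ≤ (ρ*z/Real.log 2 - c * (Real.sqrt ρ * Real.sqrt z / (1+z))) * Real.exp (-z) := step
      _ = g z := by simp only [hg]; ring
  have hmono := integral_mono_ae hf_int hg_int hfg
  have hgval : (∫ z in Set.Ioi (0:ℝ), g z)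
      = (ρ/Real.log 2) * (∫ z in Set.Ioi (0:ℝ), z * Real.exp (-z))
        - (c * Real.sqrt ρ) * ∫ z in Set.Ioi (0:ℝ), Real.sqrt z / (1+z) * Real.exp (-z) := by
    simp only [hg]
    rw [integral_sub (aux_int_zexp.const_mul _) (aux_int_h2.const_mul _),
      integral_const_mul, integral_const_mul]
  rw [hgval, aux_zexp_val, mul_one] at hmono
  refine hmono.trans ?_
  have h2 := aux_h2_lb
  have hcs : 0 ≤ c * Real.sqrt ρ := by positivity
  have := mul_le_mul_of_nonneg_left h2 hcs
  have heq : ρ/Real.log 2 = ρ * (1/Real.log 2) := by ring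
  nlinarith

/-- The effective energy efficiency with empty-buffer probability tends to 0
as the SNR ρ tends to 0 from the right. -/
theorem eee_ebp_tendsto_zero_at_zero
    (n θ lam ζ Pc c ε : ℝ)
    (hn : 0 < n) (hθ : 0 < θ) (hlam : 0 < lam) (hζ : 0 < ζ) (hPc : 0 < Pc)
    (hc : 0 < c) (hε : ε ∈ Set.Ioo (0:ℝ) 1)
    (r : ℝ → ℝ → ℝ)
    (hr : ∀ ρ ∈ Set.Ioi (0:ℝ), ∀ z ∈ Set.Ioi (0:ℝ),
      r ρ z = Real.log (1 + ρ * z) / Real.log 2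
        - c * Real.sqrt (1 - 1 / (1 + ρ * z) ^ 2))
    (E : ℝ → ℝ)
    (hE : ∀ ρ ∈ Set.Ioi (0:ℝ), E ρ = ∫ z in Set.Ioi (0:ℝ), r ρ z * Real.exp (-z))
    (η : ℝ → ℝ)
    (hη : ∀ ρ ∈ Set.Ioi (0:ℝ), η ρ =
      (-(1 / (n * θ)) * Real.log (∫ z in Set.Ioi (0:ℝ),
          (ε + (1 - ε) * Real.exp (-(n * θ * r ρ z))) * Real.exp (-z)))
        / (lam * ζ * ρ / E ρ + Pc)) :
    Tendsto η (nhdsWithin 0 (Set.Ioi 0)) (nhds 0) := by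
  obtain ⟨hε0, hε1⟩ := hε
  set l := nhdsWithin (0:ℝ) (Set.Ioi 0) with hl
  -- Part 1: the log-integral tends to 1
  have hIlim : Tendsto (fun ρ => ∫ z in Set.Ioi (0:ℝ),
      (ε + (1 - ε) * Real.exp (-(n * θ * r ρ z))) * Real.exp (-z)) l (nhds 1) := by
    have hDCT := MeasureTheory.tendsto_integral_filter_of_dominated_convergence
      (μ := volume.restrict (Set.Ioi (0:ℝ))) (l := l)
      (F := fun ρ z => (ε + (1 - ε) * Real.exp (-(n * θ * r ρ z))) * Real.exp (-z))
      (f := fun z => Real.exp (-z))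
      (bound := fun z => (ε + (1 - ε) * Real.exp (n * θ * c)) * Real.exp (-z))
      ?_ ?_ ?_ ?_
    · rw [integral_exp_neg_Ioi_zero] at hDCT
      exact hDCT
    · -- measurability
      filter_upwards [self_mem_nhdsWithin] with ρ hρ
      have hmeas : Measurable (fun z : ℝ => (ε + (1 - ε) * Real.exp (-(n * θ *
          (Real.log (1 + ρ * z) / Real.log 2 - c * Real.sqrt (1 - 1 / (1 + ρ * z) ^ 2)))))
          * Real.exp (-z)) :=
        (measurable_const.add (measurable_const.mul
          (((aux_r_meas c ρ).const_mul (n*θ)).neg.exp))).mul measurable_id.neg.exp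
      refine hmeas.aestronglyMeasurable.congr ?_
      filter_upwards [ae_restrict_mem measurableSet_Ioi] with z hz
      rw [hr ρ hρ z hz]
    · -- bound
      filter_upwards [self_mem_nhdsWithin] with ρ hρ
      filter_upwards [ae_restrict_mem measurableSet_Ioi] with z hz
      have hz0 : (0:ℝ) < z := hz
      have hρ0 : (0:ℝ) < ρ := hρ
      have h1 : (0:ℝ) < 1 + ρ*z := by nlinarith
      have hrge : -c ≤ r ρ z := by
        rw [hr ρ hρ z hz]
        have hlog0 : 0 ≤ Real.log (1+ρ*z) := Real.log_nonneg (by nlinarith)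
        have hl2 : 0 < Real.log 2 := Real.log_pos one_lt_two
        have hld : 0 ≤ Real.log (1+ρ*z)/Real.log 2 := div_nonneg hlog0 hl2.le
        have hsq1 : Real.sqrt (1 - 1/(1+ρ*z)^2) ≤ 1 := Real.sqrt_le_one.mpr (by
          have : 0 ≤ 1/(1+ρ*z)^2 := by positivity
          linarith)
        nlinarith
      have hexpb : Real.exp (-(n * θ * r ρ z)) ≤ Real.exp (n * θ * c) := by
        apply Real.exp_le_exp.mpr
        have := mul_le_mul_of_nonneg_left hrge (by positivity : (0:ℝ) ≤ n*θ)
        nlinarith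
      have h1ε : (0:ℝ) ≤ 1 - ε := by linarith
      have hnn : 0 ≤ (ε + (1 - ε) * Real.exp (-(n * θ * r ρ z))) * Real.exp (-z) := by positivity
      rw [Real.norm_eq_abs, abs_of_nonneg hnn]
      have := mul_le_mul_of_nonneg_left hexpb h1ε
      have hez := (Real.exp_pos (-z)).le
      nlinarith
    · -- bound integrable
      exact (aux_int_exp.const_mul _)
    · -- pointwise limit
      filter_upwards [ae_restrict_mem measurableSet_Ioi] with z hz
      have hz0 : (0:ℝ) < z := hz
      have hcont : ContinuousAt (fun ρ : ℝ =>
          Real.log (1 + ρ * z) / Real.log 2 - c * Real.sqrt (1 - 1 / (1 + ρ * z) ^ 2)) 0 := by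
        have h1 : ContinuousAt (fun ρ : ℝ => 1 + ρ * z) 0 := by fun_prop
        have h3 : ContinuousAt (fun ρ : ℝ => 1 - 1 / (1 + ρ * z) ^ 2) 0 :=
          continuousAt_const.sub (continuousAt_const.div (h1.pow 2) (by norm_num))
        exact ((h1.log (by norm_num)).div_const _).sub ((h3.sqrt).const_mul c)
      have hval : Real.log (1 + 0 * z) / Real.log 2 - c * Real.sqrt (1 - 1 / (1 + 0 * z) ^ 2) = 0 := by
        norm_num
      have hA : Tendsto (fun ρ => r ρ z) l (nhds 0) := by
        have h4 := hcont.tendsto.mono_left (nhdsWithin_le_nhds (s := Set.Ioi (0:ℝ)))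
        rw [hval] at h4
        refine h4.congr' ?_
        filter_upwards [self_mem_nhdsWithin] with ρ hρ
        exact (hr ρ hρ z hz).symm
      have hexp : Tendsto (fun ρ => Real.exp (-(n * θ * r ρ z))) l (nhds 1) := by
        have h5 : Tendsto (fun ρ => -(n * θ * r ρ z)) l (nhds 0) := by
          have := (hA.const_mul (n*θ)).neg
          simpa using this
        have := (Real.continuous_exp.tendsto 0).comp h5
        simpa [Function.comp_def] using this
      have h6 : Tendsto (fun ρ => (ε + (1 - ε) * Real.exp (-(n * θ * r ρ z))) * Real.exp (-z)) l
          (nhds ((ε + (1 - ε) * 1) * Real.exp (-z))) :=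
        (tendsto_const_nhds.add (tendsto_const_nhds.mul hexp)).mul tendsto_const_nhds
      have h7 : (ε + (1 - ε) * 1) * Real.exp (-z) = Real.exp (-z) := by ring
      rwa [h7] at h6
  -- Part 2: numerator tends to 0
  have hNlim : Tendsto (fun ρ => -(1 / (n * θ)) * Real.log (∫ z in Set.Ioi (0:ℝ),
      (ε + (1 - ε) * Real.exp (-(n * θ * r ρ z))) * Real.exp (-z))) l (nhds 0) := by
    have hlog := (Real.continuousAt_log one_ne_zero).tendsto.comp hIlim
    rw [Real.log_one] at hlog
    have := hlog.const_mul (-(1 / (n * θ)))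
    simpa using this
  -- Part 3: denominator tends to Pc
  set B := c * Real.exp (-2) / 3 with hB
  have hBpos : 0 < B := by positivity
  have hl2 : 0 < Real.log 2 := Real.log_pos one_lt_two
  set ρ₁ := min 1 ((B / 2 * Real.log 2) ^ 2) with hρ₁def
  have hρ₁pos : 0 < ρ₁ := lt_min one_pos (pow_pos (by positivity) 2)
  have hEbound : ∀ ρ ∈ Set.Ioo (0:ℝ) ρ₁, E ρ ≤ -(B/2) * Real.sqrt ρ := by
    intro ρ hρ
    obtain ⟨hρ0, hρlt⟩ := hρ
    have hρ1 : ρ ≤ 1 := le_of_lt (lt_of_lt_of_le hρlt (min_le_left _ _))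
    have hEeq : E ρ = ∫ z in Set.Ioi (0:ℝ),
        (Real.log (1 + ρ*z)/Real.log 2 - c * Real.sqrt (1 - 1/(1+ρ*z)^2)) * Real.exp (-z) := by
      rw [hE ρ hρ0]
      refine setIntegral_congr_fun measurableSet_Ioi fun z hz => ?_
      rw [hr ρ hρ0 z hz]
    have hkey := Ekey c ρ hc hρ0 hρ1
    rw [← hEeq] at hkey
    have hsρ : Real.sqrt ρ ≤ B / 2 * Real.log 2 := by
      have h8 := Real.sqrt_le_sqrt (le_of_lt (lt_of_lt_of_le hρlt (min_le_right _ _)))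
      rwa [Real.sqrt_sq (by positivity)] at h8
    have hsq : Real.sqrt ρ * Real.sqrt ρ = ρ := Real.mul_self_sqrt hρ0.le
    have h9 : ρ / Real.log 2 ≤ B/2 * Real.sqrt ρ := by
      rw [div_le_iff₀ hl2]
      nlinarith [Real.sqrt_nonneg ρ]
    have h10 : c * Real.sqrt ρ * (Real.exp (-2)/3) = B * Real.sqrt ρ := by
      rw [hB]; ring
    nlinarith
  have hsqrt0 : Tendsto (fun ρ : ℝ => Real.sqrt ρ) l (nhds 0) := by
    have h11 := (Real.continuous_sqrt.tendsto 0)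
    rw [Real.sqrt_zero] at h11
    exact h11.mono_left nhdsWithin_le_nhds
  have hIoo : Set.Ioo (0:ℝ) ρ₁ ∈ l := Ioo_mem_nhdsGT_of_mem ⟨le_refl 0, hρ₁pos⟩
  have hfrac : Tendsto (fun ρ => lam * ζ * ρ / E ρ) l (nhds 0) := by
    have hlow : Tendsto (fun ρ : ℝ => lam * ζ * (-(2/B) * Real.sqrt ρ)) l (nhds 0) := by
      have := (hsqrt0.const_mul (-(2/B))).const_mul (lam * ζ)
      simpa using this
    refine tendsto_of_tendsto_of_tendsto_of_le_of_le' hlow tendsto_const_nhds ?_ ?_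
    · filter_upwards [hIoo] with ρ hρ
      obtain ⟨hρ0, hρlt⟩ := hρ
      have hEb := hEbound ρ ⟨hρ0, hρlt⟩
      have hsρpos : 0 < Real.sqrt ρ := Real.sqrt_pos.mpr hρ0
      have hEneg : E ρ < 0 := lt_of_le_of_lt hEb (by nlinarith)
      have hEpos : 0 < -E ρ := by linarith
      have h12 : B/2 * Real.sqrt ρ ≤ -E ρ := by nlinarith
      have h13 : ρ / (-E ρ) ≤ ρ / (B/2 * Real.sqrt ρ) :=
        div_le_div_of_nonneg_left hρ0.le (by positivity) h12
      have hsq : Real.sqrt ρ * Real.sqrt ρ = ρ := Real.mul_self_sqrt hρ0.le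
      have h14 : ρ / (B/2 * Real.sqrt ρ) = 2/B * Real.sqrt ρ := by
        have hB0 : B ≠ 0 := ne_of_gt hBpos
        have hs0 : Real.sqrt ρ ≠ 0 := ne_of_gt hsρpos
        field_simp
        linear_combination (-1) * hsq
      have h15 : ρ / E ρ = -(ρ / (-E ρ)) := by
        field_simp
      have h16 : -(2/B * Real.sqrt ρ) ≤ ρ / E ρ := by
        rw [h15]
        rw [h14] at h13
        linarith
      have h17 : lam * ζ * ρ / E ρ = lam * ζ * (ρ / E ρ) := by ring
      rw [h17]
      calc lam * ζ * (-(2/B) * Real.sqrt ρ) = lam * ζ * (-(2/B * Real.sqrt ρ)) := by ring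
        _ ≤ lam * ζ * (ρ / E ρ) := by
          apply mul_le_mul_of_nonneg_left h16 (by positivity)
    · filter_upwards [hIoo] with ρ hρ
      obtain ⟨hρ0, hρlt⟩ := hρ
      have hEb := hEbound ρ ⟨hρ0, hρlt⟩
      have hsρpos : 0 < Real.sqrt ρ := Real.sqrt_pos.mpr hρ0
      have hEneg : E ρ < 0 := lt_of_le_of_lt hEb (by nlinarith)
      have h18 : ρ / E ρ ≤ 0 := div_nonpos_of_nonneg_of_nonpos hρ0.le hEneg.le
      have h17 : lam * ζ * ρ / E ρ = lam * ζ * (ρ / E ρ) := by ring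
      rw [h17]
      exact mul_nonpos_of_nonneg_of_nonpos (by positivity) h18
  have hDlim : Tendsto (fun ρ => lam * ζ * ρ / E ρ + Pc) l (nhds Pc) := by
    have := hfrac.add (tendsto_const_nhds (x := Pc))
    simpa using this
  -- Combine
  have hdiv := hNlim.div hDlim hPc.ne'
  rw [zero_div] at hdiv
  refine hdiv.congr' ?_
  filter_upwards [self_mem_nhdsWithin] with ρ hρ
  exact (hη ρ hρ).symm
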